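/- Define sequences (value functions) by the recursions v(0,0) = 1/(1-λ), v(2,0) = 3λ/((1-λ)(4-λ)), v(3,0) = 3λ(19+3λ)/(2(4-λ)(1-λ)(18-7λ)), v(2,2) = 9λ²/((1-λ)(4-λ)²), and v(3,2) = 9λ²(19+3λ)/(2(18-7λ)(1-λ)(4-λ)²), for λ ∈ (0,1). Then 20·v(3,2) + 31·v(2,2) + 57·v(0,2) − 108·v(3,0) = 0, where v(0,2) = v(2,0) by symmetry. -/

import Mathlib

/-- Bellman indifference identity (eq1_1) at state (3,2) for the explicit value
functions of the distance-1 policy of the auxiliary two-stripe MDP: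
`20 v(3,2) + 31 v(2,2) + 57 v(0,2) - 108 v(3,0) = 0`, with `v(0,2) = v(2,0)`. -/
theorem bellman_indifference_eq1_1
    (lam : ℝ) (h0 : 0 < lam) (h1 : lam < 1)
    (v00 v20 v30 v22 v32 : ℝ)
    (h00 : v00 = 1 / (1 - lam))
    (h20 : v20 = 3 * lam / ((1 - lam) * (4 - lam)))
    (h30 : v30 = 3 * lam * (19 + 3 * lam) / (2 * (4 - lam) * (1 - lam) * (18 - 7 * lam)))
    (h22 : v22 = 9 * lam ^ 2 / ((1 - lam) * (4 - lam) ^ 2))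
    (h32 : v32 = 9 * lam ^ 2 * (19 + 3 * lam) / (2 * (18 - 7 * lam) * (1 - lam) * (4 - lam) ^ 2)) :
    20 * v32 + 31 * v22 + 57 * v20 - 108 * v30 = 0 := by
  have ha : (1 : ℝ) - lam ≠ 0 := by linarith
  have hb : (4 : ℝ) - lam ≠ 0 := by linarith
  have hc : (18 : ℝ) - 7 * lam ≠ 0 := by linarith
  subst h00 h20 h30 h22 h32
  field_simp [show (18 : ℝ) - lam * 7 ≠ 0 by linarith]
  ring
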